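/- Let c be a real structure on the torus with two real components C₁, C₂. Then C₁ and C₂ are homotopic non-contractible simple closed curves, but they are not c-equivariantly isotopic; moreover there exists an orientation-preserving diffeomorphism commuting with c that carries C₁ to C₂. -/

import Mathlib

/-!
STATEMENT 9: for the real structure c([z]) = [z̄] on T² = ℂ/ℤ² with two real
components C₁ = {Im z = 0} and C₂ = {Im z = 1/2}:  C₁ and C₂ are homotopic
non-contractible simple closed curves; they are not c-equivariantly (ambient)
isotopic; and there is an orientation-preserving diffeomorphism commuting with c
carrying C₁ to C₂ (a translation, hence covered by an affine map with positive
determinant).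
-/

noncomputable section
noncomputable section

/-- The Gaussian lattice ℤ + ℤi in ℂ. -/
def GaussianLattice : AddSubgroup ℂ := AddSubgroup.closure {1, Complex.I}

/-- The torus ℂ/(ℤ + ℤi). -/
abbrev Torus : Type := ℂ ⧸ GaussianLattice

/-- Complex conjugation as an additive homomorphism. -/
def conjHom : ℂ →+ ℂ :=
  AddMonoidHom.mk' (fun z => (starRingEnd ℂ) z) (fun a b => by simp)

lemma conj_maps_lattice : GaussianLattice ≤ GaussianLattice.comap conjHom := by
  rw [GaussianLattice, AddSubgroup.closure_le]
  rintro z hz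
  simp only [Set.mem_insert_iff, Set.mem_singleton_iff] at hz
  rcases hz with rfl | rfl
  · refine AddSubgroup.mem_comap.mpr ?_
    have h : conjHom (1 : ℂ) = 1 := by simp [conjHom]
    rw [h]
    exact AddSubgroup.subset_closure (k := ({1, Complex.I} : Set ℂ)) (by simp)
  · refine AddSubgroup.mem_comap.mpr ?_
    have h : conjHom Complex.I = -Complex.I := by simp [conjHom]
    rw [h]
    exact neg_mem (AddSubgroup.subset_closure (k := ({1, Complex.I} : Set ℂ)) (by simp))

/-- The real structure on the torus induced by complex conjugation `z ↦ z̄`. -/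
def torusConj : Torus → Torus :=
  QuotientAddGroup.map GaussianLattice GaussianLattice conjHom conj_maps_lattice


/-- The image in the torus of the line Im(z) = 0. -/
def C₁ : Set Torus := (QuotientAddGroup.mk : ℂ → Torus) '' {z : ℂ | z.im = 0}

/-- The image in the torus of the line Im(z) = 1/2. -/
def C₂ : Set Torus := (QuotientAddGroup.mk : ℂ → Torus) '' {z : ℂ | z.im = 1 / 2}



section CircleLemmas
open Set
local notation "S¹" => AddCircle (1:ℝ)
instance fact1 : Fact ((0:ℝ) < 1) := ⟨one_pos⟩

/-- Representative in [-1/2, 1/2). -/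
def Lrep : S¹ → ℝ := fun q => (AddCircle.equivIco 1 (-(1/2)) q : ℝ)

lemma Lrep_coe (x : ℝ) (hx : x ∈ Ico (-(1/2):ℝ) (1/2)) : Lrep (x : S¹) = x := by
  have hx' : x ∈ Ico (-(1/2):ℝ) (-(1/2) + 1) := ⟨hx.1, by have := hx.2; linarith⟩
  have h : (AddCircle.equivIco 1 (-(1/2)) (x : S¹)) = ⟨x, hx'⟩ := by
    rw [Equiv.apply_eq_iff_eq_symm_apply]
    rfl
  simp [Lrep, h]

lemma coe_Lrep (q : S¹) : ((Lrep q : ℝ) : S¹) = q := by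
  exact (AddCircle.equivIco 1 (-(1/2))).symm_apply_apply q

lemma Lrep_zero : Lrep 0 = 0 := by
  simpa using Lrep_coe 0 (by norm_num)

lemma norm_neg_half : ‖((-(1/2) : ℝ) : S¹)‖ = 1/2 := by
  rw [AddCircle.norm_eq]
  norm_num [round_eq]

lemma continuousAt_Lrep {q : S¹} (hq : ‖q‖ < 1/2) : ContinuousAt Lrep q := by
  have hne : q ≠ ((-(1/2):ℝ) : S¹) := by
    intro h; rw [h, norm_neg_half] at hq; linarith
  exact continuous_subtype_val.continuousAt.comp (AddCircle.continuousAt_equivIco (p := 1) (a := -(1/2)) hne)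

lemma coe_lipschitz : LipschitzWith 1 (fun x : ℝ => (x : S¹)) := by
  refine LipschitzWith.of_dist_le_mul fun x y => ?_
  rw [NNReal.coe_one, one_mul, dist_eq_norm, dist_eq_norm, ← QuotientAddGroup.mk_sub]
  simpa [Real.norm_eq_abs] using QuotientAddGroup.norm_mk_le_norm (S := AddSubgroup.zmultiples (1:ℝ)) (m := x - y)

lemma abs_min_sub_min_le (u a b : ℝ) : |min u a - min u b| ≤ |a - b| := by
  have h := lipschitzWith_min.dist_le_mul (u, a) (u, b)
  rw [NNReal.coe_one, one_mul, Prod.dist_eq] at h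
  simp only [Real.dist_eq, sub_self, abs_zero] at h
  simpa using h.trans (max_le (abs_nonneg _) le_rfl)

lemma coe_sum (s : Finset ℕ) (f : ℕ → ℝ) :
    ((∑ k ∈ s, f k : ℝ) : S¹) = ∑ k ∈ s, ((f k : ℝ) : S¹) :=
  map_sum (QuotientAddGroup.mk' (AddSubgroup.zmultiples (1:ℝ))) f s

theorem id_circle_not_nullhomotopic : ¬ (ContinuousMap.id S¹).Nullhomotopic := by
  rintro ⟨y, ⟨H⟩⟩
  set pr : ℝ → unitInterval := fun t => Set.projIcc 0 1 zero_le_one t with hpr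
  set F : ℝ × ℝ → S¹ := fun q => H (pr q.1, (q.2 : S¹)) with hF
  have hFcont : Continuous F := by
    exact H.continuous.comp ((continuous_projIcc.comp continuous_fst).prodMk
      (continuous_quotient_mk'.comp continuous_snd))
  have hFuc : UniformContinuous F := by
    have h1 : UniformContinuous pr := (LipschitzWith.projIcc _).uniformContinuous
    have h2 : UniformContinuous (fun x : ℝ => (x : S¹)) := coe_lipschitz.uniformContinuous
    have hH : UniformContinuous ⇑H := CompactSpace.uniformContinuous_of_continuous H.continuous
    exact hH.comp (h1.prodMap h2)
  obtain ⟨δ, hδpos, hδ⟩ := Metric.uniformContinuous_iff.mp hFuc (1/2) (by norm_num)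
  obtain ⟨n, hnlt⟩ := exists_nat_gt (max 2 (1/δ))
  have hn2 : (2:ℝ) < n := lt_of_le_of_lt (le_max_left _ _) hnlt
  have hnpos : (0:ℝ) < n := by linarith
  have hn0 : n ≠ 0 := by exact_mod_cast hnpos.ne'
  have hinv : (1:ℝ)/n < δ := by
    have h1 : 1/δ < n := lt_of_le_of_lt (le_max_right _ _) hnlt
    rw [div_lt_iff₀ hδpos] at h1
    rw [div_lt_iff₀ hnpos]
    nlinarith
  have small : ∀ (t u c d : ℝ), |c - d| ≤ 1/n →
      ‖F (t, min u c) - F (t, min u d)‖ < 1/2 := by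
    intro t u c d h
    have hd : dist ((t, min u c) : ℝ × ℝ) (t, min u d) < δ := by
      rw [Prod.dist_eq]
      apply max_lt (by simpa using hδpos)
      rw [Real.dist_eq]
      exact lt_of_le_of_lt ((abs_min_sub_min_le u c d).trans h) hinv
    simpa [dist_eq_norm] using hδ hd
  set G : ℝ × ℝ → ℝ := fun q =>
    ∑ k ∈ Finset.range n, Lrep (F (q.1, min q.2 (((k:ℝ)+1)/n)) - F (q.1, min q.2 ((k:ℝ)/n)))
    with hG
  have hdiff : ∀ k : ℕ, ((k:ℝ)+1)/n - (k:ℝ)/n = 1/n := by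
    intro k; field_simp; ring
  have hGcont : Continuous G := by
    refine continuous_finset_sum _ fun k _ => ?_
    rw [continuous_iff_continuousAt]
    intro q
    have hmem : ‖F (q.1, min q.2 (((k:ℝ)+1)/n)) - F (q.1, min q.2 ((k:ℝ)/n))‖ < 1/2 := by
      apply small
      rw [hdiff k, abs_of_pos (by positivity)]
    have hc : Continuous fun q : ℝ × ℝ =>
        F (q.1, min q.2 (((k:ℝ)+1)/n)) - F (q.1, min q.2 ((k:ℝ)/n)) :=
      (hFcont.comp (continuous_fst.prodMk (continuous_snd.min continuous_const))).sub
        (hFcont.comp (continuous_fst.prodMk (continuous_snd.min continuous_const)))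
    exact ContinuousAt.comp (g := Lrep) (continuousAt_Lrep hmem) hc.continuousAt
  have hZ : ∀ t : ℝ, ∃ m : ℤ, G (t, 1) = m := by
    intro t
    have h0 : ((G (t,1) : ℝ) : S¹) = 0 := by
      rw [hG]
      simp only []
      rw [coe_sum]
      have : ∀ k ∈ Finset.range n,
          ((Lrep (F (t, min 1 (((k:ℝ)+1)/n)) - F (t, min 1 ((k:ℝ)/n))) : ℝ) : S¹)
          = F (t, min 1 (((k:ℝ)+1)/n)) - F (t, min 1 ((k:ℝ)/n)) := fun k _ => coe_Lrep _
      rw [Finset.sum_congr rfl this]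
      have htel := Finset.sum_range_sub (f := fun k : ℕ => F (t, min 1 ((k:ℝ)/n))) n
      have hcast : ∀ k : ℕ, (((k+1 : ℕ) : ℝ)) = (k:ℝ)+1 := by intro k; push_cast; ring
      simp only [hcast] at htel
      rw [htel]
      have h1 : ((n:ℝ))/n = 1 := div_self (by positivity)
      rw [h1]
      simp only [min_self, Nat.cast_zero, zero_div, min_eq_right (zero_le_one (α := ℝ))]
      have he : F (t, (1:ℝ)) = F (t, (0:ℝ)) := by
        have h10 : ((1:ℝ) : S¹) = ((0:ℝ) : S¹) := by
          rw [AddCircle.coe_period]; simp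
        rw [hF]
        show H (pr t, ((1:ℝ):S¹)) = H (pr t, ((0:ℝ):S¹))
        rw [h10]
      rw [he, sub_self]
    rw [AddCircle.coe_eq_zero_iff] at h0
    obtain ⟨m, hm⟩ := h0
    exact ⟨m, by rw [← hm]; simp⟩
  have u0 : G (0, 1) = 1 := by
    rw [hG]
    simp only []
    have hF0 : ∀ s : ℝ, F (0, s) = (s : S¹) := by
      intro s
      have : pr 0 = 0 := by
        simp only [hpr, Set.projIcc_left]
        rfl
      rw [hF]; simp only [this]
      exact H.apply_zero _
    have hterm : ∀ k ∈ Finset.range n,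
        Lrep (F (0, min 1 (((k:ℝ)+1)/n)) - F (0, min 1 ((k:ℝ)/n))) = 1/n := by
      intro k hk
      rw [Finset.mem_range] at hk
      have hk1 : ((k:ℝ)+1)/n ≤ 1 := by
        rw [div_le_one hnpos]
        have : (k:ℝ) + 1 ≤ n := by exact_mod_cast Nat.succ_le_of_lt hk
        linarith
      have hk0 : (k:ℝ)/n ≤ 1 := by
        rw [div_le_one hnpos]
        have : (k:ℝ) ≤ n := by exact_mod_cast hk.le
        linarith
      rw [min_eq_right hk1, min_eq_right hk0, hF0, hF0]
      have : ((((k:ℝ)+1)/n : ℝ) : S¹) - (((k:ℝ)/n : ℝ) : S¹) = ((1/n : ℝ) : S¹) := by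
        rw [← QuotientAddGroup.mk_sub, hdiff k]
      rw [this]
      exact Lrep_coe _ ⟨le_trans (by norm_num : (-(1/2):ℝ) ≤ 0) (by positivity), by rw [div_lt_iff₀ hnpos]; nlinarith⟩
    rw [Finset.sum_congr rfl hterm, Finset.sum_const, Finset.card_range, nsmul_eq_mul]
    field_simp
  have u1 : G (1, 1) = 0 := by
    rw [hG]
    simp only []
    have hF1 : ∀ s : ℝ, F (1, s) = y := by
      intro s
      have : pr 1 = 1 := by
        simp only [hpr, Set.projIcc_right]
        rfl
      rw [hF]; simp only [this]
      exact H.apply_one _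
    refine Finset.sum_eq_zero fun k _ => ?_
    rw [hF1, hF1, sub_self, Lrep_zero]
  have hcont : Continuous fun t : ℝ => G (t, 1) :=
    hGcont.comp (continuous_id.prodMk continuous_const)
  have hiv := intermediate_value_Icc' (zero_le_one) hcont.continuousOn
  have hmem : (1/2 : ℝ) ∈ Set.Icc (G (1,1)) (G (0,1)) := by
    rw [u0, u1]; constructor <;> norm_num
  obtain ⟨t, _, ht⟩ := hiv hmem
  obtain ⟨m, hm⟩ := hZ t
  have ht' : G (t, 1) = 1/2 := ht
  rw [ht'] at hm
  have h2 : ((2*m : ℤ) : ℝ) = 1 := by push_cast; linarith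
  have : (2*m : ℤ) = 1 := by exact_mod_cast h2
  omega

end CircleLemmas

local notation "S¹" => AddCircle (1:ℝ)

open Complex Topology

lemma mem_gaussianLattice {z : ℂ} :
    z ∈ GaussianLattice ↔ (∃ m : ℤ, z.re = m) ∧ (∃ n : ℤ, z.im = n) := by
  constructor
  · intro hz
    refine AddSubgroup.closure_induction ?_ ?_ ?_ ?_ hz
    · rintro w hw
      simp only [Set.mem_insert_iff, Set.mem_singleton_iff] at hw
      rcases hw with rfl | rfl
      · exact ⟨⟨1, by simp⟩, ⟨0, by simp⟩⟩
      · exact ⟨⟨0, by simp⟩, ⟨1, by simp⟩⟩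
    · exact ⟨⟨0, by simp⟩, ⟨0, by simp⟩⟩
    · rintro a b _ _ ⟨⟨m, hm⟩, ⟨n, hn⟩⟩ ⟨⟨m', hm'⟩, ⟨n', hn'⟩⟩
      exact ⟨⟨m + m', by simp [hm, hm']⟩, ⟨n + n', by simp [hn, hn']⟩⟩
    · rintro a _ ⟨⟨m, hm⟩, ⟨n, hn⟩⟩
      exact ⟨⟨-m, by simp [hm]⟩, ⟨-n, by simp [hn]⟩⟩
  · rintro ⟨⟨m, hm⟩, ⟨n, hn⟩⟩
    have h1 : (1 : ℂ) ∈ GaussianLattice := AddSubgroup.subset_closure (by simp)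
    have h2 : Complex.I ∈ GaussianLattice := AddSubgroup.subset_closure (by simp)
    have key : z = m • (1 : ℂ) + n • Complex.I := by
      apply Complex.ext <;> simp [hm, hn]
    rw [key]
    exact add_mem (zsmul_mem h1 m) (zsmul_mem h2 n)

lemma mk_eq_mk {z w : ℂ} :
    (QuotientAddGroup.mk z : Torus) = QuotientAddGroup.mk w ↔ w - z ∈ GaussianLattice := by
  rw [QuotientAddGroup.eq, neg_add_eq_sub]

lemma mem_C₁ {z : ℂ} : (QuotientAddGroup.mk z : Torus) ∈ C₁ ↔ ∃ n : ℤ, z.im = n := by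
  constructor
  · rintro ⟨w, hw, hwz⟩
    rw [mk_eq_mk] at hwz
    obtain ⟨-, ⟨n, hn⟩⟩ := mem_gaussianLattice.mp hwz
    refine ⟨n, ?_⟩
    have : z.im - w.im = n := by simpa [Complex.sub_im] using hn
    simp only [Set.mem_setOf_eq] at hw
    linarith
  · rintro ⟨n, hn⟩
    refine ⟨z - n * Complex.I, by simp [Complex.sub_im, hn], ?_⟩
    rw [mk_eq_mk]
    refine mem_gaussianLattice.mpr ⟨⟨0, by simp⟩, ⟨n, by simp⟩⟩

lemma mem_C₂ {z : ℂ} : (QuotientAddGroup.mk z : Torus) ∈ C₂ ↔ ∃ n : ℤ, z.im = 1/2 + n := by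
  constructor
  · rintro ⟨w, hw, hwz⟩
    rw [mk_eq_mk] at hwz
    obtain ⟨-, ⟨n, hn⟩⟩ := mem_gaussianLattice.mp hwz
    refine ⟨n, ?_⟩
    have : z.im - w.im = n := by simpa [Complex.sub_im] using hn
    simp only [Set.mem_setOf_eq] at hw
    linarith
  · rintro ⟨n, hn⟩
    refine ⟨z - n * Complex.I, by simp [Complex.sub_im, hn], ?_⟩
    rw [mk_eq_mk]
    refine mem_gaussianLattice.mpr ⟨⟨0, by simp⟩, ⟨n, by simp⟩⟩

lemma C₁_disjoint_C₂ : ∀ q : Torus, q ∈ C₁ → q ∈ C₂ → False := by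
  intro q hq1 hq2
  obtain ⟨z, hz, rfl⟩ := hq1
  obtain ⟨n, hn⟩ := mem_C₂.mp hq2
  simp only [Set.mem_setOf_eq] at hz
  rw [hz] at hn
  have h2 : ((2*n : ℤ) : ℝ) = ((-1 : ℤ) : ℝ) := by push_cast; linarith
  have := Int.cast_injective h2
  omega

lemma isQuotientMap_mk : IsQuotientMap (QuotientAddGroup.mk : ℂ → Torus) :=
  isQuotientMap_quotient_mk'

lemma isClosed_C₁ : IsClosed C₁ := by
  rw [← isQuotientMap_mk.isClosed_preimage]
  have : (QuotientAddGroup.mk : ℂ → Torus) ⁻¹' C₁ = Complex.im ⁻¹' (Set.range ((↑) : ℤ → ℝ)) := by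
    ext z
    simp only [Set.mem_preimage, Set.mem_range]
    exact ⟨fun h => (mem_C₁.mp h).imp (fun n hn => hn.symm),
      fun ⟨n, hn⟩ => mem_C₁.mpr ⟨n, hn.symm⟩⟩
  rw [this]
  exact Int.isClosedEmbedding_coe_real.isClosed_range.preimage Complex.continuous_im

lemma isClosed_C₂ : IsClosed C₂ := by
  rw [← isQuotientMap_mk.isClosed_preimage]
  have : (QuotientAddGroup.mk : ℂ → Torus) ⁻¹' C₂
      = (fun z : ℂ => z.im - 1/2) ⁻¹' (Set.range ((↑) : ℤ → ℝ)) := by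
    ext z
    simp only [Set.mem_preimage, Set.mem_range]
    exact ⟨fun h => (mem_C₂.mp h).imp (fun n hn => by linarith),
      fun ⟨n, hn⟩ => mem_C₂.mpr ⟨n, by linarith⟩⟩
  rw [this]
  exact Int.isClosedEmbedding_coe_real.isClosed_range.preimage
    (Complex.continuous_im.sub continuous_const)

lemma torusConj_mk (z : ℂ) :
    torusConj (QuotientAddGroup.mk z) = QuotientAddGroup.mk ((starRingEnd ℂ) z) := rfl

lemma fixed_mem_union {q : Torus} (hq : torusConj q = q) : q ∈ C₁ ∨ q ∈ C₂ := by
  induction q using QuotientAddGroup.induction_on with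
  | H z =>
    rw [torusConj_mk, mk_eq_mk] at hq
    obtain ⟨-, ⟨n, hn⟩⟩ := mem_gaussianLattice.mp hq
    have him : 2 * z.im = n := by
      have : (z - (starRingEnd ℂ) z).im = 2 * z.im := by simp [Complex.sub_im]; ring
      rw [this] at hn
      exact hn
    rcases Int.even_or_odd n with ⟨k, hk⟩ | ⟨k, hk⟩
    · left
      exact mem_C₁.mpr ⟨k, by rw [hk] at him; push_cast at him ⊢; linarith⟩
    · right
      exact mem_C₂.mpr ⟨k, by rw [hk] at him; push_cast at him ⊢; linarith⟩

example : IsTopologicalAddGroup Torus := inferInstance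
example : ContinuousAdd Torus := inferInstance

def ofRealHom' : ℝ →+ ℂ := AddMonoidHom.mk' (fun x => (x : ℂ)) (fun a b => by push_cast; ring)

lemma ofReal_maps_lattice :
    AddSubgroup.zmultiples (1:ℝ) ≤ GaussianLattice.comap ofRealHom' := by
  rintro x hx
  obtain ⟨k, hk⟩ := AddSubgroup.mem_zmultiples_iff.mp hx
  refine AddSubgroup.mem_comap.mpr (mem_gaussianLattice.mpr ⟨⟨k, ?_⟩, ⟨0, ?_⟩⟩) <;>
    simp [ofRealHom', ← hk]

lemma re_maps_lattice :
    GaussianLattice ≤ (AddSubgroup.zmultiples (1:ℝ)).comap Complex.reAddGroupHom := by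
  rintro z hz
  obtain ⟨⟨m, hm⟩, -⟩ := mem_gaussianLattice.mp hz
  refine AddSubgroup.mem_comap.mpr (AddSubgroup.mem_zmultiples_iff.mpr ⟨m, ?_⟩)
  simp [Complex.reAddGroupHom, hm]

def gammaOne : S¹ → Torus :=
  QuotientAddGroup.map (AddSubgroup.zmultiples (1:ℝ)) GaussianLattice ofRealHom' ofReal_maps_lattice

def torusRe : Torus → S¹ :=
  QuotientAddGroup.map GaussianLattice (AddSubgroup.zmultiples (1:ℝ))
    Complex.reAddGroupHom re_maps_lattice

lemma gammaOne_mk (x : ℝ) :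
    gammaOne ((x : ℝ) : S¹) = QuotientAddGroup.mk ((x : ℂ)) := rfl

lemma torusRe_mk (z : ℂ) : torusRe (QuotientAddGroup.mk z) = ((z.re : ℝ) : S¹) := rfl

lemma continuous_gammaOne : Continuous gammaOne := by
  rw [isQuotientMap_quotient_mk'.continuous_iff]
  exact continuous_quotient_mk'.comp Complex.continuous_ofReal

lemma continuous_torusRe : Continuous torusRe := by
  rw [isQuotientMap_mk.continuous_iff]
  exact continuous_quotient_mk'.comp Complex.continuous_re

lemma gammaOne_injective : Function.Injective gammaOne := by
  intro a b
  induction a using QuotientAddGroup.induction_on with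
  | H x =>
  induction b using QuotientAddGroup.induction_on with
  | H y =>
  intro h
  rw [gammaOne_mk, gammaOne_mk, mk_eq_mk] at h
  obtain ⟨⟨m, hm⟩, -⟩ := mem_gaussianLattice.mp h
  refine (QuotientAddGroup.eq).mpr (AddSubgroup.mem_zmultiples_iff.mpr ⟨m, ?_⟩)
  have : (y : ℝ) - x = m := by simpa using hm
  rw [zsmul_eq_mul, mul_one]
  linarith

lemma mk_I_half_add (z : ℂ) :
    (QuotientAddGroup.mk z : Torus) + QuotientAddGroup.mk (Complex.I/2)
      = QuotientAddGroup.mk (z + Complex.I/2) := by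
  rw [← QuotientAddGroup.mk_add]

def gammaTwo : S¹ → Torus := fun s => gammaOne s + QuotientAddGroup.mk (Complex.I/2)

lemma gammaTwo_mk (x : ℝ) :
    gammaTwo ((x : ℝ) : S¹) = QuotientAddGroup.mk ((x : ℂ) + Complex.I/2) := by
  rw [gammaTwo, gammaOne_mk, mk_I_half_add]

lemma continuous_gammaTwo : Continuous gammaTwo :=
  continuous_gammaOne.add continuous_const

lemma gammaTwo_injective : Function.Injective gammaTwo := by
  intro a b h
  exact gammaOne_injective (add_right_cancel h)

lemma range_gammaOne : Set.range gammaOne = C₁ := by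
  ext q
  constructor
  · rintro ⟨s, rfl⟩
    induction s using QuotientAddGroup.induction_on with
    | H x => exact mem_C₁.mpr ⟨0, by simp [ofRealHom']⟩
  · rintro ⟨w, hw, rfl⟩
    refine ⟨((w.re : ℝ) : S¹), ?_⟩
    rw [gammaOne_mk, mk_eq_mk]
    refine mem_gaussianLattice.mpr ⟨⟨0, by simp⟩, ⟨0, by simpa using hw⟩⟩

lemma range_gammaTwo : Set.range gammaTwo = C₂ := by
  ext q
  constructor
  · rintro ⟨s, rfl⟩
    induction s using QuotientAddGroup.induction_on with
    | H x =>
      rw [gammaTwo_mk]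
      exact mem_C₂.mpr ⟨0, by simp⟩
  · rintro ⟨w, hw, rfl⟩
    refine ⟨((w.re : ℝ) : S¹), ?_⟩
    rw [gammaTwo_mk, mk_eq_mk]
    simp only [Set.mem_setOf_eq] at hw
    refine mem_gaussianLattice.mpr ⟨⟨0, by simp⟩, ⟨0, by simp [hw]⟩⟩

def cGammaOne : C(S¹, Torus) := ⟨gammaOne, continuous_gammaOne⟩
def cGammaTwo : C(S¹, Torus) := ⟨gammaTwo, continuous_gammaTwo⟩
def cTorusRe : C(Torus, S¹) := ⟨torusRe, continuous_torusRe⟩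

lemma retract_one : cTorusRe.comp cGammaOne = ContinuousMap.id S¹ := by
  ext s
  induction s using QuotientAddGroup.induction_on with
  | H x =>
    show torusRe (gammaOne ((x : ℝ) : S¹)) = ((x : ℝ) : S¹)
    rw [gammaOne_mk, torusRe_mk]
    simp

lemma retract_two : cTorusRe.comp cGammaTwo = ContinuousMap.id S¹ := by
  ext s
  induction s using QuotientAddGroup.induction_on with
  | H x =>
    show torusRe (gammaTwo ((x : ℝ) : S¹)) = ((x : ℝ) : S¹)
    rw [gammaTwo_mk, torusRe_mk]
    simp

def gammaHomotopy : ContinuousMap.Homotopy cGammaOne cGammaTwo where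
  toFun := fun p => gammaOne p.2 + QuotientAddGroup.mk ((p.1 : ℝ) • (Complex.I/2))
  continuous_toFun := by
    refine ((continuous_gammaOne.comp continuous_snd).add ?_)
    exact continuous_quotient_mk'.comp
      (((continuous_subtype_val.comp continuous_fst).smul continuous_const))
  map_zero_left := by
    intro x
    simp only [Set.Icc.coe_zero, zero_smul]
    show gammaOne x + QuotientAddGroup.mk 0 = cGammaOne x
    rw [QuotientAddGroup.mk_zero, add_zero]
    rfl
  map_one_left := by
    intro x
    simp only [Set.Icc.coe_one, one_smul]
    rfl

lemma addRight_apply (q c : Torus) : (Homeomorph.addRight c) q = q + c := rfl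

lemma part1 : ∃ γ₁ γ₂ : C(AddCircle (1 : ℝ), Torus),
    Function.Injective γ₁ ∧ Function.Injective γ₂ ∧
    Set.range γ₁ = C₁ ∧ Set.range γ₂ = C₂ ∧
    ¬ γ₁.Nullhomotopic ∧ ¬ γ₂.Nullhomotopic ∧ γ₁.Homotopic γ₂ := by
  refine ⟨cGammaOne, cGammaTwo, gammaOne_injective, gammaTwo_injective,
    range_gammaOne, range_gammaTwo, ?_, ?_, ⟨gammaHomotopy⟩⟩
  · intro h
    have h' := h.comp_right cTorusRe
    rw [retract_one] at h'
    exact id_circle_not_nullhomotopic h'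
  · intro h
    have h' := h.comp_right cTorusRe
    rw [retract_two] at h'
    exact id_circle_not_nullhomotopic h'

lemma part2 : ¬ ∃ H : C(unitInterval × Torus, Torus),
    (∀ p, H (0, p) = p) ∧
    (∀ t : unitInterval, ∃ e : Torus ≃ₜ Torus, ⇑e = fun p => H (t, p)) ∧
    (∀ (t : unitInterval) (p : Torus), H (t, torusConj p) = torusConj (H (t, p))) ∧
    (fun p => H (1, p)) '' C₁ = C₂ := by
  rintro ⟨H, h0, -, hcomm, h1⟩
  set p₀ : Torus := QuotientAddGroup.mk 0 with hp₀def
  have hp₀ : p₀ ∈ C₁ := mem_C₁.mpr ⟨0, by simp⟩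
  have hfix : torusConj p₀ = p₀ := by
    rw [hp₀def, torusConj_mk]
    simp
  set f : unitInterval → Torus := fun t => H (t, p₀) with hf
  have hfc : Continuous f := H.continuous.comp (continuous_id.prodMk continuous_const)
  have hmem : ∀ t, f t ∈ C₁ ∨ f t ∈ C₂ := by
    intro t
    apply fixed_mem_union
    show torusConj (H (t, p₀)) = H (t, p₀)
    rw [← hcomm t p₀, hfix]
  have hclosed : IsClosed (f ⁻¹' C₁) := isClosed_C₁.preimage hfc
  have hcompl : (f ⁻¹' C₁)ᶜ = f ⁻¹' C₂ := by
    ext t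
    simp only [Set.mem_compl_iff, Set.mem_preimage]
    exact ⟨fun h => (hmem t).resolve_left h, fun h hc => C₁_disjoint_C₂ _ hc h⟩
  have hopen : IsOpen (f ⁻¹' C₁) := by
    rw [← isClosed_compl_iff, hcompl]
    exact isClosed_C₂.preimage hfc
  rcases isClopen_iff.mp ⟨hclosed, hopen⟩ with he | hu
  · have h₀ : (0 : unitInterval) ∈ f ⁻¹' C₁ := by
      show H (0, p₀) ∈ C₁
      rw [h0]
      exact hp₀
    rw [he] at h₀
    exact h₀
  · have hx : f 1 ∈ C₂ := by
      rw [← h1]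
      exact ⟨p₀, hp₀, rfl⟩
    have hy : f 1 ∈ C₁ := by
      have : (1 : unitInterval) ∈ f ⁻¹' C₁ := by rw [hu]; trivial
      exact this
    exact C₁_disjoint_C₂ _ hy hx

lemma part3 : ∃ φ : Torus ≃ₜ Torus,
    (∀ p, φ (torusConj p) = torusConj (φ p)) ∧
    φ '' C₁ = C₂ ∧
    ∃ (A : ℂ →ₗ[ℝ] ℂ) (b : ℂ), 0 < LinearMap.det A ∧
      ∀ z : ℂ, φ (QuotientAddGroup.mk z) = QuotientAddGroup.mk (A z + b) := by
  refine ⟨Homeomorph.addRight (QuotientAddGroup.mk (Complex.I/2) : Torus), ?_, ?_,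
    LinearMap.id, Complex.I/2, ?_, ?_⟩
  · intro p
    induction p using QuotientAddGroup.induction_on with
    | H z =>
      simp only [addRight_apply]
      rw [torusConj_mk, mk_I_half_add, mk_I_half_add, torusConj_mk, mk_eq_mk]
      refine mem_gaussianLattice.mpr ⟨⟨0, ?_⟩, ⟨-1, ?_⟩⟩ <;>
        simp [map_add, Complex.sub_re, Complex.sub_im, Complex.add_re, Complex.add_im,
          Complex.conj_re, Complex.conj_im, Complex.div_im, Complex.div_re] <;>
        norm_num
  · ext q
    constructor
    · rintro ⟨q', hq', rfl⟩
      obtain ⟨w, hw, rfl⟩ := hq'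
      rw [addRight_apply, mk_I_half_add]
      refine mem_C₂.mpr ⟨0, ?_⟩
      simp only [Set.mem_setOf_eq] at hw
      simp [Complex.add_im, hw]
    · rintro ⟨w, hw, rfl⟩
      simp only [Set.mem_setOf_eq] at hw
      refine ⟨QuotientAddGroup.mk (w - Complex.I/2), ?_, ?_⟩
      · refine mem_C₁.mpr ⟨0, ?_⟩
        simp [Complex.sub_im, hw]
      · rw [addRight_apply, mk_I_half_add, sub_add_cancel]
  · rw [LinearMap.det_id]
    norm_num
  · intro z
    rw [addRight_apply, mk_I_half_add]
    rfl

theorem twin_real_circles :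
    -- C₁ and C₂ are homotopic non-contractible simple closed curves
    (∃ γ₁ γ₂ : C(AddCircle (1 : ℝ), Torus),
        Function.Injective γ₁ ∧ Function.Injective γ₂ ∧
        Set.range γ₁ = C₁ ∧ Set.range γ₂ = C₂ ∧
        ¬ γ₁.Nullhomotopic ∧ ¬ γ₂.Nullhomotopic ∧
        γ₁.Homotopic γ₂) ∧
    -- C₁ and C₂ are not c-equivariantly isotopic
    (¬ ∃ H : C(unitInterval × Torus, Torus),
        (∀ p, H (0, p) = p) ∧
        (∀ t : unitInterval, ∃ e : Torus ≃ₜ Torus, ⇑e = fun p => H (t, p)) ∧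
        (∀ (t : unitInterval) (p : Torus), H (t, torusConj p) = torusConj (H (t, p))) ∧
        (fun p => H (1, p)) '' C₁ = C₂) ∧
    -- an orientation-preserving diffeomorphism commuting with c carries C₁ to C₂
    (∃ φ : Torus ≃ₜ Torus,
        (∀ p, φ (torusConj p) = torusConj (φ p)) ∧
        φ '' C₁ = C₂ ∧
        ∃ (A : ℂ →ₗ[ℝ] ℂ) (b : ℂ), 0 < LinearMap.det A ∧
          ∀ z : ℂ, φ (QuotientAddGroup.mk z) = QuotientAddGroup.mk (A z + b)) := by
  exact ⟨part1, part2, part3⟩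

end
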